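/- The element tr(R(ξ)R(ν)) − 4 of 𝒜[ε][[ξ⁻¹,ν⁻¹]] is divisible by (ξ−ν)², and the quotient (tr(R(ξ)R(ν)) − 4)/(ξ−ν)² lies in ξ⁻²ν⁻²·𝒜[ε][[ξ⁻¹,ν⁻¹]]. -/

import Mathlib

set_option synthInstance.maxHeartbeats 1000000
set_option maxHeartbeats 1000000

noncomputable section

open scoped BigOperators

/-- Index set of the generators `qᵢ, rᵢ` of 𝒜. -/
inductive NLSVar : Type
  | q : ℕ → NLSVar
  | r : ℕ → NLSVar

/-- 𝒜 = ℂ[q₀, r₀, q₁, r₁, …]. -/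
abbrev NLSA : Type := MvPolynomial NLSVar ℂ

/-- 𝒜[ε, ε⁻¹], as Laurent polynomials in ε over 𝒜. -/
abbrev NLSE : Type := LaurentPolynomial NLSA

instance : CommRing NLSE := inferInstance
instance : Algebra ℂ NLSE := inferInstance

/-- The generator qᵢ viewed in 𝒜[ε,ε⁻¹]. -/
def qv (i : ℕ) : NLSE := LaurentPolynomial.C (MvPolynomial.X (NLSVar.q i))

/-- The generator rᵢ viewed in 𝒜[ε,ε⁻¹]. -/
def rv (i : ℕ) : NLSE := LaurentPolynomial.C (MvPolynomial.X (NLSVar.r i))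

/-- ε ∈ 𝒜[ε,ε⁻¹]. -/
def eps : NLSE := LaurentPolynomial.T 1

/-- ε⁻¹ ∈ 𝒜[ε,ε⁻¹]. -/
def epsInv : NLSE := LaurentPolynomial.T (-1)

/-- Membership in the subring 𝒜[ε] ⊆ 𝒜[ε,ε⁻¹]: no negative powers of ε. -/
def inAE (x : NLSE) : Prop := ∀ n : ℤ, n < 0 → (show ℤ →₀ NLSA from AddMonoidAlgebra.coeff x) n = 0

/-- The Laurent-series ring 𝒜[ε,ε⁻¹][[ξ⁻¹]][ξ]; the Hahn-series exponent `n`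
records the power of ξ⁻¹. -/
abbrev NLSL : Type := LaurentSeries NLSE

instance : CommRing NLSL := inferInstance
instance : Algebra ℂ NLSL := inferInstance

/-- ξ as a Laurent series in ξ⁻¹. -/
def xiL : NLSL := HahnSeries.single (-1 : ℤ) 1

/-- Apply a zero-preserving map to all coefficients of a Laurent series. -/
def coeffMap {R S : Type*} [Zero R] [Zero S] (f : ZeroHom R S)
    (x : HahnSeries ℤ R) : HahnSeries ℤ S where
  coeff n := f (x.coeff n)
  isPWO_support' := x.isPWO_support'.mono (by
    intro n hn
    simp only [Function.mem_support, ne_eq] at hn ⊢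
    exact fun h => hn (by rw [h, map_zero]))

/-- The derivation ∂, applied coefficientwise to a Laurent series in ξ⁻¹. -/
def dmap (d : Derivation ℂ NLSE NLSE) : NLSL → NLSL :=
  coeffMap ⟨fun x => d x, map_zero d⟩

/-- `∂` is the (unique) derivation of 𝒜[ε,ε⁻¹] with ∂(qᵢ)=qᵢ₊₁, ∂(rᵢ)=rᵢ₊₁, ∂(ε)=0. -/
def IsDel (del : Derivation ℂ NLSE NLSE) : Prop :=
  (∀ i, del (qv i) = qv (i + 1)) ∧ (∀ i, del (rv i) = rv (i + 1)) ∧ del eps = 0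

/-- The constant embedding 𝒜[ε,ε⁻¹] → 𝒜[ε,ε⁻¹][[ξ⁻¹]][ξ]. -/
def CL (x : NLSE) : NLSL := HahnSeries.C x

/-- The matrix U(ξ) = [[−ξ, −q],[r, ξ]]. -/
def Umat : Matrix (Fin 2) (Fin 2) NLSL :=
  !![-xiL, -(CL (qv 0)); CL (rv 0), xiL]

/-- The matrix [[2+a, b],[c, −a]]. -/
def Rmat (a b c : NLSL) : Matrix (Fin 2) (Fin 2) NLSL := !![2 + a, b; c, -a]

/-- `a, b, c` are the entries of the (unique) basic matrix resolvent
R(ξ) = [[2+a(ξ), b(ξ)],[c(ξ), −a(ξ)]]. -/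
def IsMR (del : Derivation ℂ NLSE NLSE) (a b c : NLSL) : Prop :=
  (∀ n : ℤ, n ≤ 0 → a.coeff n = 0) ∧
  (∀ n : ℤ, n ≤ 0 → b.coeff n = 0) ∧
  (∀ n : ℤ, n ≤ 0 → c.coeff n = 0) ∧
  (∀ n : ℤ, inAE (a.coeff n)) ∧ (∀ n : ℤ, inAE (b.coeff n)) ∧ (∀ n : ℤ, inAE (c.coeff n)) ∧
  CL eps • (Rmat a b c).map (dmap del)
      + (Umat * Rmat a b c - Rmat a b c * Umat) = 0 ∧
  (Rmat a b c).det = 0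

/-- A_j, the ξ^{−j−1}-coefficient of a(ξ). -/
def coA (a : NLSL) (j : ℕ) : NLSE := a.coeff (j + 1 : ℤ)

/-- The NLS derivations D_j: derivations of 𝒜[ε,ε⁻¹] commuting with ∂, annihilating ε,
with D_j(q) = 2^{j+1} ε⁻¹ B_{j+1} and D_j(r) = 2^{j+1} ε⁻¹ C_{j+1}. -/
def IsNLSD (del : Derivation ℂ NLSE NLSE) (b c : NLSL)
    (D : ℕ → Derivation ℂ NLSE NLSE) : Prop :=
  (∀ j x, D j (del x) = del (D j x)) ∧
  (∀ j, D j eps = 0) ∧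
  (∀ j, D j (qv 0) = (2 : NLSE) ^ (j + 1) * epsInv * coA b (j + 1)) ∧
  (∀ j, D j (rv 0) = (2 : NLSE) ^ (j + 1) * epsInv * coA c (j + 1))

end

noncomputable section

/-- The two-variable Laurent-series ring 𝒜[ε,ε⁻¹][[ξ⁻¹,ν⁻¹]][ξ,ν]; the outer
Hahn-series exponent records the power of ν⁻¹, the inner one the power of ξ⁻¹. -/
abbrev NLSL2 : Type := HahnSeries ℤ NLSL

instance : CommRing NLSL2 := inferInstance
instance : Algebra ℂ NLSL2 := inferInstance

/-- Embedding of series in ξ (constant in ν). -/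
def toXi (x : NLSL) : NLSL2 := HahnSeries.C x

/-- A series in ξ re-read as the corresponding series in ν. -/
def toNu (x : NLSL) : NLSL2 :=
  coeffMap ⟨fun e => (HahnSeries.C e : NLSL), map_zero _⟩ x

/-- ν. -/
def nuL : NLSL2 := HahnSeries.single (-1 : ℤ) 1

/-- ν⁻¹. -/
def nuInv : NLSL2 := HahnSeries.single (1 : ℤ) 1

/-- ξ, in the two-variable ring. -/
def xiL2 : NLSL2 := toXi xiL

/-- ε, in the two-variable ring. -/
def epsL2 : NLSL2 := toXi (CL eps)

lemma dmap_zero (d : Derivation ℂ NLSE NLSE) : dmap d 0 = 0 := by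
  ext n
  simp [dmap, coeffMap]

/-- ∂ applied to all 𝒜[ε,ε⁻¹]-coefficients of a two-variable series. -/
def dmap2 (d : Derivation ℂ NLSE NLSE) : NLSL2 → NLSL2 :=
  coeffMap ⟨dmap d, dmap_zero d⟩

/-- The loop operator ∇(ν) = Σ_{j≥0} 2^{−j} ν^{−j−2} D_j, applied to a series in ξ. -/
def nabla (D : ℕ → Derivation ℂ NLSE NLSE) (x : NLSL) : NLSL2 :=
  HahnSeries.single (2 : ℤ) (1 : NLSL) *
    HahnSeries.ofPowerSeries ℤ NLSL
      (PowerSeries.mk fun j => ((2 : ℂ) ^ j)⁻¹ • dmap (D j) x)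

end
noncomputable section

/-- R(ξ), in the two-variable ring. -/
def RXi' (a b c : NLSL) : Matrix (Fin 2) (Fin 2) NLSL2 := (Rmat a b c).map toXi

/-- R(ν), in the two-variable ring. -/
def RNu' (a b c : NLSL) : Matrix (Fin 2) (Fin 2) NLSL2 :=
  !![2 + toNu a, toNu b; toNu c, -toNu a]

lemma inAE_zero : inAE 0 := fun n _ => rfl

lemma inAE_add {x y : NLSE} (hx : inAE x) (hy : inAE y) : inAE (x + y) := fun n hn => by
  have : (show ℤ →₀ NLSA from AddMonoidAlgebra.coeff (x + y)) n = (show ℤ →₀ NLSA from AddMonoidAlgebra.coeff x) n + (show ℤ →₀ NLSA from AddMonoidAlgebra.coeff y) n :=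
    Finsupp.add_apply _ _ n
  rw [this, hx n hn, hy n hn, add_zero]

lemma inAE_neg {x : NLSE} (hx : inAE x) : inAE (-x) := fun n hn => by
  have : (show ℤ →₀ NLSA from AddMonoidAlgebra.coeff (-x)) n = -((show ℤ →₀ NLSA from AddMonoidAlgebra.coeff x) n) := Finsupp.neg_apply _ n
  rw [this, hx n hn, neg_zero]

lemma inAE_mul {x y : NLSE} (hx : inAE x) (hy : inAE y) : inAE (x * y) := fun n hn => by
  rw [show (show ℤ →₀ NLSA from AddMonoidAlgebra.coeff (x * y)) n = AddMonoidAlgebra.coeff (x * y) n from rfl, AddMonoidAlgebra.coeff_mul]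
  unfold Finsupp.sum; apply Finset.sum_eq_zero
  intro a₁ ha₁
  simp only []
  apply Finset.sum_eq_zero
  intro a₂ ha₂
  have h1 : (0:ℤ) ≤ a₁ := by
    by_contra h
    exact (Finsupp.mem_support_iff.mp ha₁) (hx a₁ (by omega))
  have h2 : (0:ℤ) ≤ a₂ := by
    by_contra h
    exact (Finsupp.mem_support_iff.mp ha₂) (hy a₂ (by omega))
  rw [if_neg (by omega)]

lemma inAE_sum {ι : Type*} (s : Finset ι) (f : ι → NLSE) (h : ∀ i ∈ s, inAE (f i)) :
    inAE (∑ i ∈ s, f i) := by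
  classical
  induction s using Finset.induction_on with
  | empty => simpa using inAE_zero
  | insert a s hni ih =>
    rw [Finset.sum_insert hni]
    exact inAE_add (h a (Finset.mem_insert_self a s))
      (ih fun i hi => h i (Finset.mem_insert_of_mem hi))

/-- Coefficient function of the first divided difference. -/
def D1fun (x : NLSL) (m n : ℤ) : NLSE :=
  if 1 ≤ m ∧ 1 ≤ n then -(x.coeff (m + n - 1)) else 0

lemma D1fun_bdd (x : NLSL) (m : ℤ) : BddBelow (Function.support (D1fun x m)) := by
  refine ⟨1, fun n hn => ?_⟩
  rw [Function.mem_support] at hn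
  by_contra h
  exact hn (by rw [D1fun, if_neg (by omega)])

/-- Row of the first divided difference. -/
def D1row (x : NLSL) (m : ℤ) : NLSL :=
  HahnSeries.ofSuppBddBelow (D1fun x m) (D1fun_bdd x m)

lemma D1row_coeff (x : NLSL) (m n : ℤ) : (D1row x m).coeff n = D1fun x m n := rfl

lemma D1row_eq_zero (x : NLSL) {m : ℤ} (hm : m < 1) : D1row x m = 0 := by
  ext n
  rw [D1row_coeff, D1fun, if_neg (by omega)]
  rfl

lemma D1_bdd (x : NLSL) : BddBelow (Function.support (fun m => D1row x m)) := by
  refine ⟨1, fun m hm => ?_⟩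
  rw [Function.mem_support] at hm
  by_contra h
  exact hm (D1row_eq_zero x (by omega))

/-- The first divided difference (x(ξ) − x(ν))/(ξ − ν). -/
def D1 (x : NLSL) : NLSL2 :=
  HahnSeries.ofSuppBddBelow (fun m => D1row x m) (D1_bdd x)

lemma D1_coeff (x : NLSL) (m : ℤ) : (D1 x).coeff m = D1row x m := rfl

lemma single_neg_one_mul_coeff {y : NLSL} {n : ℤ} :
    ((HahnSeries.single (-1 : ℤ) (1 : NLSE)) * y).coeff n = y.coeff (n + 1) := by
  have := HahnSeries.coeff_single_mul_add (r := (1 : NLSE)) (x := y) (a := n + 1) (b := (-1 : ℤ))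
  rw [show n + 1 + -1 = n by ring] at this
  rw [this, one_mul]

lemma nuL_mul_coeff {S : NLSL2} {m : ℤ} : (nuL * S).coeff m = S.coeff (m + 1) := by
  have := HahnSeries.coeff_single_mul_add (r := (1 : NLSL)) (x := S) (a := m + 1) (b := (-1 : ℤ))
  rw [show m + 1 + -1 = m by ring] at this
  rw [nuL, this, one_mul]

lemma xiL2_mul_coeff {S : NLSL2} {m n : ℤ} :
    (((xiL2 : NLSL2) * S).coeff m).coeff n = (S.coeff m).coeff (n + 1) := by
  have h1 : (xiL2 * S).coeff m = xiL * S.coeff m := by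
    rw [xiL2, toXi, show (HahnSeries.C xiL : NLSL2) = HahnSeries.single 0 xiL from rfl]
    exact HahnSeries.coeff_single_zero_mul
  rw [h1, xiL, single_neg_one_mul_coeff]

lemma toXi_coeff (x : NLSL) (m n : ℤ) :
    ((toXi x).coeff m).coeff n = if m = 0 then x.coeff n else 0 := by
  rw [toXi, show (HahnSeries.C x : NLSL2) = HahnSeries.single 0 x from rfl,
    HahnSeries.coeff_single]
  split_ifs <;> rfl

lemma toNu_coeff (x : NLSL) (m n : ℤ) :
    ((toNu x).coeff m).coeff n = if n = 0 then x.coeff m else 0 := by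
  rw [show (toNu x).coeff m = HahnSeries.C (x.coeff m) from rfl,
    show (HahnSeries.C (x.coeff m) : NLSL) = HahnSeries.single 0 (x.coeff m) from rfl,
    HahnSeries.coeff_single]
  split_ifs <;> rfl

/-- Key: (ξ − ν) · D1 x = x(ξ) − x(ν). -/
lemma D1_key (x : NLSL) (hx : ∀ n : ℤ, n ≤ 0 → x.coeff n = 0) :
    (xiL2 - nuL) * D1 x = toXi x - toNu x := by
  refine HahnSeries.coeff_injective (funext fun m => HahnSeries.coeff_injective (funext fun n => ?_))
  show (((xiL2 - nuL) * D1 x).coeff m).coeff n = ((toXi x - toNu x).coeff m).coeff n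
  rw [sub_mul, HahnSeries.coeff_sub, HahnSeries.coeff_sub, HahnSeries.coeff_sub,
    HahnSeries.coeff_sub, xiL2_mul_coeff, nuL_mul_coeff, toXi_coeff, toNu_coeff,
    D1_coeff, D1_coeff, D1row_coeff, D1row_coeff, D1fun, D1fun]
  rw [show m + (n + 1) - 1 = m + n by ring, show m + 1 + n - 1 = m + n by ring]
  by_cases hm : m = 0
  · subst hm
    rw [if_pos rfl, if_neg (show ¬((1:ℤ) ≤ 0 ∧ 1 ≤ n + 1) by omega)]
    by_cases hn1 : 1 ≤ n
    · rw [if_pos (show (1:ℤ) ≤ 0 + 1 ∧ 1 ≤ n by omega), if_neg (show ¬ n = 0 by omega)]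
      try simp
    · rw [if_neg (show ¬((1:ℤ) ≤ 0 + 1 ∧ 1 ≤ n) by omega)]
      have hxn : x.coeff n = 0 := hx n (by omega)
      by_cases hn0 : n = 0
      · subst hn0
        rw [if_pos rfl, hxn]
        try simp
      · rw [if_neg hn0, hxn]
        try simp
  · rw [if_neg hm]
    by_cases hn : n = 0
    · subst hn
      rw [if_pos rfl, if_neg (show ¬(1 ≤ m + 1 ∧ (1:ℤ) ≤ 0) by omega)]
      by_cases hm1 : 1 ≤ m
      · rw [if_pos (show 1 ≤ m ∧ (1:ℤ) ≤ 0 + 1 by omega)]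
        try simp
      · rw [if_neg (show ¬(1 ≤ m ∧ (1:ℤ) ≤ 0 + 1) by omega), hx m (by omega)]
        try simp
    · rw [if_neg hn]
      by_cases hmn : 1 ≤ m ∧ 1 ≤ n
      · rw [if_pos (show 1 ≤ m ∧ 1 ≤ n + 1 by omega), if_pos (show 1 ≤ m + 1 ∧ 1 ≤ n by omega)]
        try simp
      · rw [if_neg (show ¬(1 ≤ m ∧ 1 ≤ n + 1) by omega),
          if_neg (show ¬(1 ≤ m + 1 ∧ 1 ≤ n) by omega)]
        try simp

lemma hahn_mul_coeff_vanish {R : Type*} [CommRing R] {x y : HahnSeries ℤ R} {k l : ℤ}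
    (hx : ∀ p : ℤ, p < k → x.coeff p = 0) (hy : ∀ p : ℤ, p < l → y.coeff p = 0)
    {n : ℤ} (hn : n < k + l) : (x * y).coeff n = 0 := by
  rw [HahnSeries.coeff_mul]
  apply Finset.sum_eq_zero
  intro ij hij
  rw [Finset.mem_addAntidiagonal] at hij
  have h1 : k ≤ ij.1 := by
    by_contra h
    exact hij.1 (hx ij.1 (by omega))
  have h2 : l ≤ ij.2 := by
    by_contra h
    exact hij.2.1 (hy ij.2 (by omega))
  exact absurd hij.2.2 (by omega)

lemma hahn_mul_coeff_inAE {x y : NLSL} (hx : ∀ p : ℤ, inAE (x.coeff p))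
    (hy : ∀ p : ℤ, inAE (y.coeff p)) (n : ℤ) : inAE ((x * y).coeff n) := by
  rw [HahnSeries.coeff_mul]
  exact inAE_sum _ _ fun ij _ => inAE_mul (hx ij.1) (hy ij.2)

lemma D1_coeff_vanish (x : NLSL) (m : ℤ) {p : ℤ} (hp : p < 1) :
    ((D1 x).coeff m).coeff p = 0 := by
  rw [D1_coeff, D1row_coeff, D1fun, if_neg (by omega)]

lemma D1_row_vanish (x : NLSL) {m : ℤ} (hm : m < 1) : (D1 x).coeff m = 0 := by
  rw [D1_coeff, D1row_eq_zero x hm]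

lemma D1_coeff_inAE (x : NLSL) (hx : ∀ p : ℤ, inAE (x.coeff p)) (m n : ℤ) :
    inAE (((D1 x).coeff m).coeff n) := by
  rw [D1_coeff, D1row_coeff, D1fun]
  split_ifs
  · exact inAE_neg (hx _)
  · exact inAE_zero

/-- Outer coefficient of a product in the 2-variable ring, as a finite sum. -/
lemma mulD1_coeff_vanish {x y : NLSL} (m n : ℤ) (h : m < 2 ∨ n < 2) :
    (((D1 x * D1 y).coeff m).coeff n) = 0 := by
  rcases h with h | h
  · rw [hahn_mul_coeff_vanish (k := 1) (l := 1) (fun p hp => D1_row_vanish x hp)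
      (fun p hp => D1_row_vanish y hp) (by omega)]
    rfl
  · rw [HahnSeries.coeff_mul]
    have hs := map_sum (HahnSeries.coeff.addMonoidHom n)
      (fun ij : ℤ × ℤ => (D1 x).coeff ij.1 * (D1 y).coeff ij.2)
      (Finset.antidiagonal (D1 x).isPWO_support (D1 y).isPWO_support m)
    simp only [HahnSeries.coeff.addMonoidHom_apply] at hs
    rw [hs]
    apply Finset.sum_eq_zero
    intro ij _
    exact hahn_mul_coeff_vanish (k := 1) (l := 1)
      (fun p hp => D1_coeff_vanish x ij.1 hp) (fun p hp => D1_coeff_vanish y ij.2 hp) (by omega)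

lemma mulD1_coeff_inAE {x y : NLSL} (hx : ∀ p : ℤ, inAE (x.coeff p))
    (hy : ∀ p : ℤ, inAE (y.coeff p)) (m n : ℤ) :
    inAE (((D1 x * D1 y).coeff m).coeff n) := by
  rw [HahnSeries.coeff_mul]
  have hs := map_sum (HahnSeries.coeff.addMonoidHom n)
    (fun ij : ℤ × ℤ => (D1 x).coeff ij.1 * (D1 y).coeff ij.2)
    (Finset.antidiagonal (D1 x).isPWO_support (D1 y).isPWO_support m)
  simp only [HahnSeries.coeff.addMonoidHom_apply] at hs
  rw [hs]
  exact inAE_sum _ _ fun ij _ =>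
    hahn_mul_coeff_inAE (D1_coeff_inAE x hx ij.1) (D1_coeff_inAE y hy ij.2) n

def Chom : NLSE →ₙ+* NLSL := (HahnSeries.C : NLSE →+* NLSL).toNonUnitalRingHom

lemma toNu_eq (x : NLSL) : toNu x = x.map Chom := rfl

lemma toNu_mul (x y : NLSL) : toNu (x * y) = toNu x * toNu y := by
  rw [toNu_eq, toNu_eq, toNu_eq]; exact HahnSeries.map_mul Chom

lemma toNu_add (x y : NLSL) : toNu (x + y) = toNu x + toNu y := by
  rw [toNu_eq (x + y), toNu_eq x, toNu_eq y]
  exact HahnSeries.map_add ((HahnSeries.C : NLSE →+* NLSL).toAddMonoidHom)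

lemma toNu_zero : toNu 0 = 0 := by
  refine HahnSeries.coeff_injective (funext fun m => ?_)
  simp [toNu, coeffMap]

lemma trace_eq (a b c : NLSL) :
    (RXi' a b c * RNu' a b c).trace
      = (2 + toXi a) * (2 + toNu a) + toXi b * toNu c
        + (toXi c * toNu b + toXi a * toNu a) := by
  simp [RXi', RNu', Rmat, Matrix.trace_fin_two, Matrix.mul_apply, Fin.sum_univ_two, toXi]
  rw [← HahnSeries.C_mul_eq_smul, ← HahnSeries.C_mul_eq_smul, map_add, map_ofNat]
  rw [show (HahnSeries.C a : NLSL2) = HahnSeries.single 0 a from rfl]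
  ring

/-- tr(R(ξ)R(ν)) − 4 is divisible by (ξ−ν)², with quotient in
ξ⁻²ν⁻²·𝒜[ε][[ξ⁻¹,ν⁻¹]]. -/
theorem nls_trace_divisible
    (del : Derivation ℂ NLSE NLSE) (hdel : IsDel del)
    (a b c : NLSL) (hR : IsMR del a b c) :
    ∃ S : NLSL2,
      (xiL2 - nuL) ^ 2 * S = (RXi' a b c * RNu' a b c).trace - 4 ∧
      (∀ m n : ℤ, m < 2 ∨ n < 2 → (S.coeff m).coeff n = 0) ∧
      (∀ m n : ℤ, inAE ((S.coeff m).coeff n)) := by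
  obtain ⟨ha0, hb0, hc0, haE, hbE, hcE, -, hdet⟩ := hR
  refine ⟨-(D1 a * D1 a) - D1 b * D1 c, ?_, ?_, ?_⟩
  · have ka := D1_key a ha0
    have kb := D1_key b hb0
    have kc := D1_key c hc0
    rw [Rmat, Matrix.det_fin_two_of] at hdet
    have hrel2 : a + a + a * a + b * c = 0 := by linear_combination -hdet
    have hX : toXi a + toXi a + toXi a * toXi a + toXi b * toXi c = 0 := by
      have h := congrArg toXi hrel2
      simpa only [toXi, map_add, map_mul, map_zero] using h
    have hN : toNu a + toNu a + toNu a * toNu a + toNu b * toNu c = 0 := by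
      have h := congrArg toNu hrel2
      rw [toNu_add, toNu_add, toNu_add, toNu_mul, toNu_mul, toNu_zero] at h
      exact h
    have e : (xiL2 - nuL) ^ 2 * (-(D1 a * D1 a) - D1 b * D1 c)
        = -((toXi a - toNu a) * (toXi a - toNu a))
          - (toXi b - toNu b) * (toXi c - toNu c) := by
      rw [← ka, ← kb, ← kc]; ring
    rw [e, trace_eq]
    linear_combination -hX - hN
  · intro m n h
    rw [HahnSeries.coeff_sub, HahnSeries.coeff_neg, HahnSeries.coeff_sub, HahnSeries.coeff_neg,
      mulD1_coeff_vanish m n h, mulD1_coeff_vanish m n h]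
    simp
  · intro m n
    rw [HahnSeries.coeff_sub, HahnSeries.coeff_neg, HahnSeries.coeff_sub, HahnSeries.coeff_neg,
      sub_eq_add_neg]
    exact inAE_add (inAE_neg (mulD1_coeff_inAE haE haE m n))
      (inAE_neg (mulD1_coeff_inAE hbE hcE m n))

end
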